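/- For every variance a ≥ 0 and every slope η with 0 ≤ η ≤ 1, ∫ max(η·x, x)² d(gaussianReal 0 a)(x) = (1 + η²)·a/2; equivalently, 2·∫ max(η·x, x)² d(gaussianReal 0 a)(x) = (1 + η²)·a. -/

import Mathlib

open MeasureTheory ProbabilityTheory Real Set
open scoped NNReal ENNReal

lemma aux_integral_sq_exp {b : ℝ} (hb : 0 < b) :
    ∫ x : ℝ, x ^ 2 * Real.exp (-b * x ^ 2) = Real.sqrt (π / b) / (2 * b) := by
  have hint2 : Integrable (fun x : ℝ => x ^ 2 * Real.exp (-b * x ^ 2)) := by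
    have := integrable_rpow_mul_exp_neg_mul_sq hb (s := 2) (by norm_num)
    have h2 : ∀ x : ℝ, x ^ (2 : ℝ) = x ^ 2 := fun x => by
      rw [show ((2:ℝ) = ((2:ℕ):ℝ)) by norm_num, Real.rpow_natCast]
    simpa only [h2] using this
  have hexp : Integrable (fun x : ℝ => Real.exp (-b * x ^ 2)) := integrable_exp_neg_mul_sq hb
  have hderiv : ∀ x : ℝ, HasDerivAt (fun x : ℝ => x * Real.exp (-b * x ^ 2))
      (Real.exp (-b * x ^ 2) - 2 * b * (x ^ 2 * Real.exp (-b * x ^ 2))) x := by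
    intro x
    have h := (hasDerivAt_id x).mul (((hasDerivAt_pow 2 x).const_mul (-b)).exp)
    refine h.congr_deriv ?_
    simp only [id_eq, one_mul, pow_one]
    ring
  have hf' : Integrable (fun x : ℝ =>
      Real.exp (-b * x ^ 2) - 2 * b * (x ^ 2 * Real.exp (-b * x ^ 2))) :=
    hexp.sub (hint2.const_mul _)
  have h0 := integral_eq_zero_of_hasDerivAt_of_integrable hderiv hf'
    (integrable_mul_exp_neg_mul_sq hb)
  rw [integral_sub hexp (hint2.const_mul _), MeasureTheory.integral_const_mul, integral_gaussian,
    sub_eq_zero] at h0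
  field_simp at h0 ⊢
  linarith

lemma aux_integrable_sq_exp {b : ℝ} (hb : 0 < b) :
    Integrable (fun x : ℝ => x ^ 2 * Real.exp (-b * x ^ 2)) := by
  have := integrable_rpow_mul_exp_neg_mul_sq hb (s := 2) (by norm_num)
  have h2 : ∀ x : ℝ, x ^ (2 : ℝ) = x ^ 2 := fun x => by
    rw [show ((2:ℝ) = ((2:ℕ):ℝ)) by norm_num, Real.rpow_natCast]
  simpa only [h2] using this

lemma aux_pdf_mul (a : ℝ≥0) (g : ℝ → ℝ) :
    (fun x => gaussianPDFReal 0 a x * g x)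
      = fun x => (Real.sqrt (2 * Real.pi * a))⁻¹ * (g x * Real.exp (-(2*(a:ℝ))⁻¹ * x ^ 2)) := by
  funext x
  rw [gaussianPDFReal]
  have : -(x - 0) ^ 2 / (2 * (a:ℝ)) = -(2*(a:ℝ))⁻¹ * x ^ 2 := by
    by_cases ha : (a:ℝ) = 0
    · simp [ha]
    · field_simp; ring
  rw [this]
  ring

lemma aux_coe_pdf (a : ℝ≥0) (g : ℝ → ℝ) :
    (fun x : ℝ => ((gaussianPDFReal 0 a x).toNNReal : ℝ≥0) • g x)
      = fun x => gaussianPDFReal 0 a x * g x := by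
  funext x
  rw [NNReal.smul_def, smul_eq_mul, Real.coe_toNNReal _ (gaussianPDFReal_nonneg 0 a x)]

lemma aux_integrable_sq (a : ℝ≥0) :
    Integrable (fun x : ℝ => x ^ 2) (gaussianReal 0 a) := by
  by_cases ha : a = 0
  · subst ha
    simp only [gaussianReal_zero_var]
    exact (integrable_const ((0:ℝ) ^ 2)).congr (ae_eq_dirac (fun x : ℝ => x ^ 2)).symm
  · have hapos : (0:ℝ) < a := by positivity
    have hb : 0 < (2 * (a:ℝ))⁻¹ := by positivity
    rw [gaussianReal_of_var_ne_zero _ ha, show gaussianPDF 0 a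
        = fun x => ((gaussianPDFReal 0 a x).toNNReal : ℝ≥0∞) from rfl,
      integrable_withDensity_iff_integrable_smul
        ((measurable_gaussianPDFReal 0 a).real_toNNReal)]
    rw [aux_coe_pdf a, aux_pdf_mul a]
    exact (aux_integrable_sq_exp hb).const_mul _

lemma aux_integral_sq (a : ℝ≥0) :
    ∫ x : ℝ, x ^ 2 ∂(gaussianReal 0 a) = a := by
  by_cases ha : a = 0
  · subst ha; simp
  · have hapos : (0:ℝ) < a := by positivity
    have hb : 0 < (2 * (a:ℝ))⁻¹ := by positivity
    rw [gaussianReal_of_var_ne_zero _ ha, show gaussianPDF 0 a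
        = fun x => ((gaussianPDFReal 0 a x).toNNReal : ℝ≥0∞) from rfl,
      integral_withDensity_eq_integral_smul
        ((measurable_gaussianPDFReal 0 a).real_toNNReal)]
    rw [aux_coe_pdf a, aux_pdf_mul a, MeasureTheory.integral_const_mul,
      aux_integral_sq_exp hb]
    have hsqrt : Real.sqrt (Real.pi / (2 * (a:ℝ))⁻¹) = Real.sqrt (2 * Real.pi * a) := by
      congr 1
      field_simp
    rw [hsqrt]
    have hne : Real.sqrt (2 * Real.pi * a) ≠ 0 := by
      refine ne_of_gt (Real.sqrt_pos.mpr ?_)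
      positivity
    field_simp

lemma aux_map_neg (a : ℝ≥0) :
    (gaussianReal 0 a).map (fun x => -x) = gaussianReal 0 a := by
  have h := gaussianReal_map_const_mul (μ := 0) (v := a) (-1)
  have h1 : (fun x : ℝ => (-1 : ℝ) * x) = fun x => -x := by funext x; ring
  rw [h1] at h
  rw [h]
  congr 1
  · norm_num
  · ext
    push_cast
    norm_num

lemma aux_integral_odd (a : ℝ≥0) :
    ∫ x : ℝ, x * |x| ∂(gaussianReal 0 a) = 0 := by
  have hmeas : Measurable fun x : ℝ => x * |x| := measurable_id.mul measurable_id.abs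
  have h : ∫ x : ℝ, x * |x| ∂(gaussianReal 0 a)
      = ∫ x : ℝ, (-x) * |(-x)| ∂(gaussianReal 0 a) := by
    conv_lhs => rw [← aux_map_neg a]
    rw [integral_map measurable_neg.aemeasurable hmeas.aestronglyMeasurable]
  have h2 : ∫ x : ℝ, (-x) * |(-x)| ∂(gaussianReal 0 a)
      = - ∫ x : ℝ, x * |x| ∂(gaussianReal 0 a) := by
    rw [← integral_neg]
    congr 1
    funext x
    rw [abs_neg]
    ring
  rw [h2] at h
  linarith

lemma aux_integrable_odd (a : ℝ≥0) :
    Integrable (fun x : ℝ => x * |x|) (gaussianReal 0 a) := by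
  refine (aux_integrable_sq a).mono
    (measurable_id.mul measurable_id.abs).aestronglyMeasurable
    (Filter.Eventually.of_forall fun x => ?_)
  have : ‖x * |x|‖ = ‖x ^ 2‖ := by
    simp only [Real.norm_eq_abs, abs_mul, abs_abs, sq_abs, abs_sq, sq]
  rw [this]

/-- For every variance `a ≥ 0` and slope `0 ≤ η ≤ 1`, the second moment of the
LeakyReLU `x ↦ max(η·x, x)` of a centered Gaussian satisfies
`∫ max(ηx, x)² dN(0,a)(x) = (1 + η²)·a/2`; equivalently,
`2·∫ max(ηx, x)² dN(0,a)(x) = (1 + η²)·a`. -/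
theorem gaussian_leakyrelu_sq_moment (a : ℝ≥0) (η : ℝ) (hη0 : 0 ≤ η) (hη1 : η ≤ 1) :
    (∫ x, max (η * x) x ^ 2 ∂(gaussianReal 0 a)) = (1 + η ^ 2) * (a : ℝ) / 2 ∧
      2 * (∫ x, max (η * x) x ^ 2 ∂(gaussianReal 0 a)) = (1 + η ^ 2) * (a : ℝ) := by
  have key : ∀ x : ℝ, max (η * x) x ^ 2
      = (1 + η ^ 2) / 2 * x ^ 2 + (1 - η ^ 2) / 2 * (x * |x|) := by
    intro x
    rcases le_total 0 x with hx | hx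
    · rw [max_eq_right (by nlinarith), abs_of_nonneg hx]; ring
    · rw [max_eq_left (by nlinarith), abs_of_nonpos hx]; ring
  have hI : (∫ x, max (η * x) x ^ 2 ∂(gaussianReal 0 a)) = (1 + η ^ 2) * (a : ℝ) / 2 := by
    calc (∫ x, max (η * x) x ^ 2 ∂(gaussianReal 0 a))
        = ∫ x, ((1 + η ^ 2) / 2 * x ^ 2 + (1 - η ^ 2) / 2 * (x * |x|)) ∂(gaussianReal 0 a) := by
          exact integral_congr_ae (Filter.Eventually.of_forall fun x => key x)
      _ = (1 + η ^ 2) / 2 * (a : ℝ) + (1 - η ^ 2) / 2 * 0 := by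
          rw [integral_add ((aux_integrable_sq a).const_mul _)
            ((aux_integrable_odd a).const_mul _), MeasureTheory.integral_const_mul,
            MeasureTheory.integral_const_mul, aux_integral_sq, aux_integral_odd]
      _ = (1 + η ^ 2) * (a : ℝ) / 2 := by ring
  exact ⟨hI, by rw [hI]; ring⟩
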